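/- Combinatorial Nullstellensatz for consecutive derivatives: let J ⊆ ℕᵐ be a finite decreasing set, S₁,...,Sₘ ⊆ F finite nonempty sets, S = S₁×···×Sₘ, and F ∈ F[x₁,...,xₘ] a nonzero polynomial with leading monomial xⁱ (for some monomial ordering). If i ∈ J_S = {i ∈ ℕᵐ : i ⋡ (r₁#S₁,...,rₘ#Sₘ) for all r ∉ J}, then there exist s ∈ S and j ∈ J such that F^(j)(s) ≠ 0. -/

import Mathlib

open MvPolynomial

/-- The `i`-th Hasse derivative of a multivariate polynomial, characterized by
`F(x+z) = Σ_i F^(i)(x) z^i`. -/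
noncomputable def mvHasseDeriv {K : Type*} [CommSemiring K] {σ : Type*}
    (i : σ →₀ ℕ) (F : MvPolynomial σ K) : MvPolynomial σ K :=
  (AddMonoidAlgebra.coeff F).sum fun k c => monomial (k - i) ((i.prod fun j ij => (k j).choose ij : ℕ) * c)


/-- `i` is the leading monomial (exponent) of `F` with respect to the monomial order `ord`. -/
def IsLeadingMonomial {K : Type*} [CommSemiring K] {m : ℕ} (ord : MonomialOrder (Fin m))
    (F : MvPolynomial (Fin m) K) (i : Fin m →₀ ℕ) : Prop :=
  i ∈ F.support ∧ ∀ k ∈ F.support, ord.toSyn k ≤ ord.toSyn i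

/-- The footprint of an ideal: exponents of monomials not in the ideal generated by the
leading monomials of the (nonzero) elements of the ideal. -/
def footprint {K : Type*} [Field K] {m : ℕ} (ord : MonomialOrder (Fin m))
    (Kid : Ideal (MvPolynomial (Fin m) K)) : Set (Fin m →₀ ℕ) :=
  {i | (MvPolynomial.monomial i (1 : K)) ∉
    Ideal.span {g | ∃ F ∈ Kid, ∃ l, IsLeadingMonomial ord F l ∧
      g = MvPolynomial.monomial l (1 : K)}}

set_option linter.unusedSectionVars false

namespace CNaux

section HasseBasics

variable {K : Type*} [CommSemiring K] {σ : Type*} [DecidableEq σ]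

theorem mvHasseDeriv_add (i : σ →₀ ℕ) (F G : MvPolynomial σ K) :
    mvHasseDeriv i (F + G) = mvHasseDeriv i F + mvHasseDeriv i G := by
  classical
  unfold mvHasseDeriv
  rw [AddMonoidAlgebra.coeff_add]
  apply Finsupp.sum_add_index' <;> intro k <;> simp [mul_add]

theorem mvHasseDeriv_monomial (i k : σ →₀ ℕ) (c : K) :
    mvHasseDeriv i (monomial k c) =
      monomial (k - i) ((i.prod fun j ij => (k j).choose ij : ℕ) * c) := by
  classical
  unfold mvHasseDeriv
  rw [← MvPolynomial.single_eq_monomial, AddMonoidAlgebra.coeff_single, Finsupp.sum_single_index]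
  simp

theorem aevalX_eq_sum (j : σ) (p : Polynomial K) (N : ℕ) (hN : p.natDegree < N) :
    Polynomial.aeval (X j : MvPolynomial σ K) p
      = ∑ t ∈ Finset.range N, monomial (Finsupp.single j t) (p.coeff t) := by
  rw [Polynomial.aeval_def, Polynomial.eval₂_eq_sum_range' _ hN _]
  simp [algebraMap_eq, X_pow_eq_monomial, C_mul_monomial]

theorem coeff_prod_aevalX (u : Finset σ) (p : σ → Polynomial K) (b : σ →₀ ℕ) :
    coeff b (∏ j ∈ u, Polynomial.aeval (X j : MvPolynomial σ K) (p j)) =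
      if b.support ⊆ u then ∏ j ∈ u, (p j).coeff (b j) else 0 := by
  classical
  induction u using Finset.induction generalizing b with
  | empty =>
    simp only [Finset.prod_empty, Finset.subset_empty, Finsupp.support_eq_empty]
    rcases eq_or_ne b 0 with rfl | hb
    · simp
    · simp [coeff_one, hb, Ne.symm hb]
  | @insert j u hj ih =>
    rw [Finset.prod_insert hj,
      aevalX_eq_sum j (p j) (max ((p j).natDegree) (b j) + 1) (by omega),
      Finset.sum_mul, coeff_sum]
    rw [Finset.sum_eq_single (b j)]
    · rw [coeff_monomial_mul', if_pos (by simp [Finsupp.single_le_iff])]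
      rw [ih]
      have hsupp : ((b - Finsupp.single j (b j)).support ⊆ u) ↔ (b.support ⊆ insert j u) := by
        constructor
        · intro h k hk
          rcases eq_or_ne k j with rfl | hkj
          · exact Finset.mem_insert_self _ _
          · refine Finset.mem_insert_of_mem (h ?_)
            simp only [Finsupp.mem_support_iff, Finsupp.tsub_apply, Finsupp.single_apply,
              if_neg (Ne.symm hkj)] at hk ⊢
            simpa using hk
        · intro h k hk
          simp only [Finsupp.mem_support_iff, Finsupp.tsub_apply, Finsupp.single_apply] at hk
          rcases eq_or_ne k j with rfl | hkj
          · simp at hk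
          · rw [if_neg (Ne.symm hkj)] at hk
            have := h (Finsupp.mem_support_iff.mpr (by simpa using hk))
            simp only [Finset.mem_insert] at this
            tauto
      by_cases hb : b.support ⊆ insert j u
      · rw [if_pos (hsupp.mpr hb), if_pos hb, Finset.prod_insert hj]
        congr 1
        apply Finset.prod_congr rfl
        intro k hk
        have hbk : (b - Finsupp.single j (b j)) k = b k := by
          rw [Finsupp.tsub_apply, Finsupp.single_apply,
            if_neg (by rintro rfl; exact hj hk)]
          omega
        rw [hbk]
      · rw [if_neg (fun h => hb (hsupp.mp h)), if_neg hb, mul_zero]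
    · intro t ht htne
      rw [coeff_monomial_mul']
      by_cases hle : Finsupp.single j t ≤ b
      · rw [if_pos hle, ih]
        have htlt : t < b j := by
          have h1 := (Finsupp.le_def.mp hle) j
          rw [Finsupp.single_apply, if_pos rfl] at h1
          omega
        rw [if_neg, mul_zero]
        intro h
        have hjmem : j ∈ (b - Finsupp.single j t).support := by
          rw [Finsupp.mem_support_iff, Finsupp.tsub_apply, Finsupp.single_apply, if_pos rfl]
          omega
        exact hj (h hjmem)
      · rw [if_neg hle]
    · intro h
      simp only [Finset.mem_range] at h
      omega

theorem eval_mvHasseDeriv [Fintype σ] (s : σ → K) (b : σ →₀ ℕ) (G : MvPolynomial σ K) :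
    eval s (mvHasseDeriv b G) = coeff b (aeval (fun j => X j + C (s j)) G) := by
  induction G using MvPolynomial.induction_on' with
  | add p q hp hq => rw [mvHasseDeriv_add, map_add, map_add, coeff_add, hp, hq]
  | monomial k c =>
    rw [mvHasseDeriv_monomial, eval_monomial, aeval_monomial]
    have hconv : ∀ j : σ, (X j + C (s j) : MvPolynomial σ K) ^ (k j)
        = Polynomial.aeval (X j : MvPolynomial σ K)
            ((Polynomial.X + Polynomial.C (s j)) ^ (k j)) := by
      intro j
      rw [map_pow, map_add, Polynomial.aeval_X, Polynomial.aeval_C]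
      rfl
    rw [Finsupp.prod_fintype _ _ (fun j => pow_zero _),
        Finsupp.prod_fintype _ _ (fun j => pow_zero _)]
    simp_rw [hconv]
    rw [algebraMap_eq, coeff_C_mul, coeff_prod_aevalX, if_pos (Finset.subset_univ _)]
    simp_rw [Polynomial.coeff_X_add_C_pow]
    push_cast
    rw [Finsupp.prod_fintype _ _ (fun j => by simp)]
    simp only [Pi.sub_apply]
    rw [Finset.prod_mul_distrib]
    ring

theorem constantCoeff_taus (s : σ → K) (P : MvPolynomial σ K) :
    constantCoeff (aeval (fun j => X j + C (s j)) P) = eval s P := by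
  have h : (constantCoeff.comp
      ((aeval (fun j => (X j + C (s j) : MvPolynomial σ K))).toRingHom)
        : MvPolynomial σ K →+* K) = eval s := by
    apply MvPolynomial.ringHom_ext <;> intro a <;> simp
  exact RingHom.congr_fun h P

end HasseBasics

section LeadingMonomial

variable {K : Type*} {m : ℕ} (ord : MonomialOrder (Fin m))

theorem exists_isLeadingMonomial [CommSemiring K] {F : MvPolynomial (Fin m) K} (hF : F ≠ 0) :
    ∃ i, IsLeadingMonomial ord F i := by
  obtain ⟨i, hi, hmax⟩ := Finset.exists_max_image F.support (fun k => ord.toSyn k)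
    (MvPolynomial.support_nonempty.mpr hF)
  exact ⟨i, hi, hmax⟩

theorem isLeadingMonomial_monomial [CommSemiring K] {u : Fin m →₀ ℕ} {c : K} (hc : c ≠ 0) :
    IsLeadingMonomial ord (monomial u c) u := by
  classical
  constructor
  · rw [mem_support_iff, coeff_monomial, if_pos rfl]; exact hc
  · intro k hk
    rw [support_monomial, if_neg hc] at hk
    rw [Finset.mem_singleton.mp hk]

theorem isLeadingMonomial_mul [Field K] {F G : MvPolynomial (Fin m) K} {i k : Fin m →₀ ℕ}
    (hF : IsLeadingMonomial ord F i) (hG : IsLeadingMonomial ord G k) :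
    IsLeadingMonomial ord (F * G) (i + k) ∧
      coeff (i + k) (F * G) = coeff i F * coeff k G := by
  classical
  have hcoeff : coeff (i + k) (F * G) = coeff i F * coeff k G := by
    rw [coeff_mul]
    rw [Finset.sum_eq_single (i, k)]
    · intro p hp hne
      rw [Finset.HasAntidiagonal.mem_antidiagonal] at hp
      by_contra hc
      have h1 : coeff p.1 F ≠ 0 := fun h => hc (by rw [h, zero_mul])
      have h2 : coeff p.2 G ≠ 0 := fun h => hc (by rw [h, mul_zero])
      have hle1 := hF.2 p.1 (mem_support_iff.mpr h1)
      have hle2 := hG.2 p.2 (mem_support_iff.mpr h2)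
      have heq : ord.toSyn p.1 + ord.toSyn p.2 = ord.toSyn i + ord.toSyn k := by
        rw [← map_add, ← map_add, hp]
      have e1 : ord.toSyn p.1 = ord.toSyn i := le_antisymm hle1 (by
        by_contra hlt
        push_neg at hlt
        exact absurd heq (ne_of_lt (add_lt_add_of_lt_of_le hlt hle2)))
      have ep1 : p.1 = i := ord.toSyn.injective e1
      have ep2 : p.2 = k := by
        rw [ep1] at hp
        exact add_left_cancel hp
      exact hne (Prod.ext ep1 ep2)
    · intro h
      rw [Finset.HasAntidiagonal.mem_antidiagonal] at h
      exact absurd rfl h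
  refine ⟨⟨mem_support_iff.mpr ?_, ?_⟩, hcoeff⟩
  · rw [hcoeff]
    exact mul_ne_zero (mem_support_iff.mp hF.1) (mem_support_iff.mp hG.1)
  · intro k' hk'
    obtain ⟨a, ha, b, hb, rfl⟩ := Finset.mem_add.mp (MvPolynomial.support_mul F G hk')
    rw [map_add, map_add]
    exact add_le_add (hF.2 a ha) (hG.2 b hb)

theorem isLeadingMonomial_prod [Field K] {ι : Type*} (u : Finset ι)
    (P : ι → MvPolynomial (Fin m) K) (w : ι → (Fin m →₀ ℕ))
    (h : ∀ l ∈ u, IsLeadingMonomial ord (P l) (w l)) :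
    IsLeadingMonomial ord (∏ l ∈ u, P l) (∑ l ∈ u, w l) ∧
      coeff (∑ l ∈ u, w l) (∏ l ∈ u, P l) = ∏ l ∈ u, coeff (w l) (P l) := by
  classical
  induction u using Finset.induction with
  | empty =>
    simp only [Finset.prod_empty, Finset.sum_empty]
    refine ⟨?_, by simp [coeff_monomial]⟩
    have := isLeadingMonomial_monomial ord (u := 0) (c := (1 : K)) one_ne_zero
    simpa using this
  | @insert j u hj ih =>
    rw [Finset.prod_insert hj, Finset.sum_insert hj]
    have hins := h j (Finset.mem_insert_self _ _)
    have ihh := ih (fun l hl => h l (Finset.mem_insert_of_mem hl))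
    obtain ⟨hlm, hco⟩ := isLeadingMonomial_mul ord hins ihh.1
    exact ⟨hlm, by rw [hco, ihh.2, Finset.prod_insert hj]⟩

end LeadingMonomial

section Grid

variable {K : Type*} [Field K]

theorem exists_grid_eval_ne_zero :
    ∀ (m : ℕ) (f : MvPolynomial (Fin m) K) (S : Fin m → Finset K), f ≠ 0 →
      (∀ j, degreeOf j f < (S j).card) →
      ∃ s : Fin m → K, (∀ j, s j ∈ S j) ∧ eval s f ≠ 0 := by
  intro m
  induction m with
  | zero =>
    intro f S hf _
    obtain ⟨c, rfl⟩ := C_surjective (Fin 0) f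
    exact ⟨fun x => x.elim0, fun j => j.elim0, by
      rw [eval_C]; exact fun hc => hf (by rw [hc, map_zero])⟩
  | succ n ih =>
    intro f S hf hdeg
    set p := finSuccEquiv K n f with hp
    have hpne : p ≠ 0 := by
      simp only [hp, ne_eq, EmbeddingLike.map_eq_zero_iff]
      exact hf
    have hlc : p.leadingCoeff ≠ 0 := Polynomial.leadingCoeff_ne_zero.mpr hpne
    have hdeg' : ∀ j : Fin n, degreeOf j p.leadingCoeff < (S j.succ).card := by
      intro j
      exact lt_of_le_of_lt (degreeOf_coeff_finSuccEquiv f j p.natDegree) (hdeg j.succ)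
    obtain ⟨y, hy, hey⟩ := ih p.leadingCoeff (fun j => S j.succ) hlc hdeg'
    set q := p.map (eval y) with hq
    have hqne : q ≠ 0 := by
      intro h0
      have : q.coeff p.natDegree = 0 := by rw [h0, Polynomial.coeff_zero]
      rw [hq, Polynomial.coeff_map] at this
      exact hey this
    have hqdeg : q.natDegree < (S 0).card := by
      calc q.natDegree ≤ p.natDegree := Polynomial.natDegree_map_le
      _ = degreeOf 0 f := natDegree_finSuccEquiv f
      _ < (S 0).card := hdeg 0
    have : ∃ a ∈ S 0, q.eval a ≠ 0 := by
      by_contra hno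
      push_neg at hno
      exact hqne (Polynomial.eq_zero_of_natDegree_lt_card_of_eval_eq_zero' q (S 0) hno hqdeg)
    obtain ⟨a, ha, hqa⟩ := this
    refine ⟨Fin.cons a y, ?_, ?_⟩
    · intro j
      refine Fin.cases ?_ ?_ j
      · rwa [Fin.cons_zero]
      · intro j'; rw [Fin.cons_succ]; exact hy j'
    · rw [eval_eq_eval_mv_eval']
      exact hqa

end Grid

section GPolys

variable {K : Type*} {m : ℕ} (ord : MonomialOrder (Fin m)) [Field K] (S : Fin m → Finset K)

noncomputable def gpoly (j : Fin m) : MvPolynomial (Fin m) K :=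
  ∏ a ∈ S j, (X j - C a)

noncomputable def Gprod (r : Fin m →₀ ℕ) : MvPolynomial (Fin m) K :=
  ∏ j : Fin m, (gpoly S j) ^ (r j)

noncomputable def Dall (r : Fin m →₀ ℕ) : Fin m →₀ ℕ :=
  Finsupp.equivFunOnFinite.symm (fun j => r j * (S j).card)

@[simp] theorem Dall_apply (r : Fin m →₀ ℕ) (j : Fin m) :
    Dall S r j = r j * (S j).card := rfl

theorem isLeadingMonomial_X_sub_C (j : Fin m) (a : K) :
    IsLeadingMonomial ord (X j - C a) (Finsupp.single j 1) ∧
      coeff (Finsupp.single j 1) (X j - C a) = 1 := by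
  classical
  have hco : coeff (Finsupp.single j 1) (X j - C a : MvPolynomial (Fin m) K) = 1 := by
    rw [coeff_sub, coeff_X_same, coeff_C,
      if_neg (fun h => one_ne_zero (Finsupp.single_eq_zero.mp h.symm))]
    ring
  refine ⟨⟨mem_support_iff.mpr (by rw [hco]; exact one_ne_zero), ?_⟩, hco⟩
  intro k hk
  have hsub := MvPolynomial.support_sub (Fin m) (X j : MvPolynomial (Fin m) K) (C a)
  have hk' := hsub hk
  rw [support_X] at hk'
  rcases Finset.mem_union.mp hk' with h | h
  · rw [Finset.mem_singleton.mp h]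
  · have hk0 : k = 0 := by
      have hc := mem_support_iff.mp h
      rw [coeff_C] at hc
      by_contra hne
      rw [if_neg (fun hh => hne hh.symm)] at hc
      exact hc rfl
    rw [hk0, map_zero]
    exact bot_le

theorem isLeadingMonomial_gpoly (j : Fin m) :
    IsLeadingMonomial ord (gpoly S j) (Finsupp.single j (S j).card) ∧
      coeff (Finsupp.single j (S j).card) (gpoly S j) = 1 := by
  classical
  have h := isLeadingMonomial_prod ord (S j) (fun a => (X j - C a : MvPolynomial (Fin m) K))
    (fun _ => Finsupp.single j 1) (fun a _ => (isLeadingMonomial_X_sub_C ord j a).1)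
  have hsum : (∑ _a ∈ S j, Finsupp.single j 1) = Finsupp.single j (S j).card := by
    rw [Finset.sum_const]
    ext j'
    simp [Finsupp.smul_single, Finsupp.single_apply]
  rw [hsum] at h
  refine ⟨h.1, ?_⟩
  rw [gpoly, h.2]
  apply Finset.prod_eq_one
  intro a _
  exact (isLeadingMonomial_X_sub_C ord j a).2

theorem isLeadingMonomial_Gprod (r : Fin m →₀ ℕ) :
    IsLeadingMonomial ord (Gprod S r) (Dall S r) ∧
      coeff (Dall S r) (Gprod S r) = 1 := by
  classical
  have hpow : ∀ j : Fin m, IsLeadingMonomial ord ((gpoly S j) ^ (r j))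
      (r j • Finsupp.single j (S j).card) ∧
      coeff (r j • Finsupp.single j (S j).card) ((gpoly S j) ^ (r j)) = 1 := by
    intro j
    have h := isLeadingMonomial_prod ord (Finset.range (r j))
      (fun _ => gpoly S j) (fun _ => Finsupp.single j (S j).card)
      (fun _ _ => (isLeadingMonomial_gpoly ord S j).1)
    rw [Finset.prod_const, Finset.sum_const, Finset.card_range] at h
    refine ⟨h.1, ?_⟩
    rw [h.2]
    apply Finset.prod_eq_one
    intro a _
    exact (isLeadingMonomial_gpoly ord S j).2
  have h := isLeadingMonomial_prod ord Finset.univ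
    (fun j => (gpoly S j) ^ (r j)) (fun j => r j • Finsupp.single j (S j).card)
    (fun j _ => (hpow j).1)
  have hsum : (∑ j : Fin m, r j • Finsupp.single j (S j).card) = Dall S r := by
    ext j'
    rw [Finsupp.finset_sum_apply]
    simp [Finsupp.smul_single, Finsupp.single_apply]
  rw [hsum] at h
  refine ⟨h.1, ?_⟩
  rw [Gprod, h.2]
  exact Finset.prod_eq_one (fun j _ => (hpow j).2)

end GPolys

section Decomposition

variable {K : Type*} [Field K] {m : ℕ} (S : Fin m → Finset K)

theorem exists_decomposition (ord : MonomialOrder (Fin m)) (hS : ∀ j, (S j).Nonempty) (F : MvPolynomial (Fin m) K) :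
    ∃ f : (Fin m →₀ ℕ) →₀ MvPolynomial (Fin m) K,
      (∀ r j, degreeOf j (f r) < (S j).card) ∧ F = f.sum (fun r p => p * Gprod S r) := by
  classical
  have hd : ∀ j, 0 < (S j).card := fun j => Finset.card_pos.mpr (hS j)
  suffices h : ∀ z : ord.syn, ∀ F : MvPolynomial (Fin m) K,
      (F = 0 ∨ ∃ i, IsLeadingMonomial ord F i ∧ ord.toSyn i ≤ z) →
      ∃ f : (Fin m →₀ ℕ) →₀ MvPolynomial (Fin m) K,
        (∀ r j, degreeOf j (f r) < (S j).card) ∧ F = f.sum (fun r p => p * Gprod S r) by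
    rcases eq_or_ne F 0 with rfl | hF
    · exact h 0 0 (Or.inl rfl)
    · obtain ⟨i, hi⟩ := exists_isLeadingMonomial ord hF
      exact h (ord.toSyn i) F (Or.inr ⟨i, hi, le_refl _⟩)
  intro z
  induction z using WellFoundedLT.induction with
  | _ z IH =>
  intro F hF
  rcases hF with rfl | ⟨i, hlm, hle⟩
  · refine ⟨0, fun r j => ?_, by simp⟩
    simp only [Finsupp.coe_zero, Pi.zero_apply, degreeOf_zero]
    exact hd j
  set r : Fin m →₀ ℕ := Finsupp.equivFunOnFinite.symm (fun j => i j / (S j).card) with hr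
  set q : Fin m →₀ ℕ := Finsupp.equivFunOnFinite.symm (fun j => i j % (S j).card) with hq
  have hqr : q + Dall S r = i := by
    ext j
    show i j % (S j).card + (i j / (S j).card) * (S j).card = i j
    exact Nat.mod_add_div' _ _
  have hc : coeff i F ≠ 0 := mem_support_iff.mp hlm.1
  have hmon := isLeadingMonomial_monomial ord (u := q) (c := coeff i F) hc
  have hGt := isLeadingMonomial_mul ord hmon (isLeadingMonomial_Gprod ord S r).1
  rw [hqr] at hGt
  set Gt := monomial q (coeff i F) * Gprod S r with hGtdef
  have hGtco : coeff i Gt = coeff i F := by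
    rw [hGt.2, coeff_monomial, if_pos rfl, (isLeadingMonomial_Gprod ord S r).2, mul_one]
  have hsplit : F = (F - Gt) + Gt := by ring
  have hbound : ∀ j, degreeOf j (monomial q (coeff i F)) < (S j).card := by
    intro j
    apply lt_of_le_of_lt _ (Nat.mod_lt (i j) (hd j))
    apply degreeOf_le_iff.mpr
    intro k hk
    rw [support_monomial, if_neg hc] at hk
    rw [Finset.mem_singleton.mp hk]
    rfl
  rcases eq_or_ne (F - Gt) 0 with h0 | hne
  · refine ⟨Finsupp.single r (monomial q (coeff i F)), ?_, ?_⟩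
    · intro r' j
      rw [Finsupp.single_apply]
      split
      · exact hbound j
      · rw [degreeOf_zero]; exact hd j
    · rw [Finsupp.sum_single_index (by simp : (0 : MvPolynomial (Fin m) K) * Gprod S r = 0)]
      rw [h0, zero_add] at hsplit
      exact hsplit
  · obtain ⟨i', hlm'⟩ := exists_isLeadingMonomial ord hne
    have hsup : ∀ k ∈ (F - Gt).support, ord.toSyn k ≤ ord.toSyn i := by
      intro k hk
      have hmem := MvPolynomial.support_sub (Fin m) F Gt hk
      rcases Finset.mem_union.mp hmem with h | h
      · exact hlm.2 k h
      · exact hGt.1.2 k h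
    have hii : i' ≠ i := by
      intro he
      have hz : coeff i (F - Gt) = 0 := by rw [coeff_sub, hGtco]; ring
      exact (mem_support_iff.mp hlm'.1) (he ▸ hz)
    have hlt : ord.toSyn i' < ord.toSyn i :=
      lt_of_le_of_ne (hsup i' hlm'.1) (fun he => hii (ord.toSyn.injective he))
    obtain ⟨f', hf'deg, hf'sum⟩ := IH (ord.toSyn i') (lt_of_lt_of_le hlt hle) (F - Gt)
      (Or.inr ⟨i', hlm', le_refl _⟩)
    refine ⟨f' + Finsupp.single r (monomial q (coeff i F)), ?_, ?_⟩
    · intro r' j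
      rw [Finsupp.add_apply]
      apply lt_of_le_of_lt (degreeOf_add_le j _ _)
      apply max_lt (hf'deg r' j)
      rw [Finsupp.single_apply]
      split
      · exact hbound j
      · rw [degreeOf_zero]; exact hd j
    · rw [Finsupp.sum_add_index' (h := fun r p => p * Gprod S r) (fun r0 => zero_mul (Gprod S r0))
        (fun r0 (p1 p2 : MvPolynomial (Fin m) K) => add_mul p1 p2 (Gprod S r0))]
      rw [Finsupp.sum_single_index (by simp : (0 : MvPolynomial (Fin m) K) * Gprod S r = 0)]
      rw [← hf'sum]
      exact hsplit

end Decomposition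

end CNaux

/-- Combinatorial Nullstellensatz for consecutive derivatives. -/
theorem comb_nullstellensatz_consecutive {K : Type*} [Field K] {m : ℕ}
    (ord : MonomialOrder (Fin m)) (J : Finset (Fin m →₀ ℕ))
    (hJ : ∀ i ∈ J, ∀ k : Fin m →₀ ℕ, k ≤ i → k ∈ J)
    (S : Fin m → Finset K) (hS : ∀ j, (S j).Nonempty)
    (F : MvPolynomial (Fin m) K) (hF : F ≠ 0) (i : Fin m →₀ ℕ)
    (hlm : IsLeadingMonomial ord F i)
    (hi : ∀ r : Fin m →₀ ℕ, r ∉ J → ¬ (∀ j, r j * (S j).card ≤ i j)) :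
    ∃ s : Fin m → K, (∀ j, s j ∈ S j) ∧
      ∃ jj ∈ J, MvPolynomial.eval s (mvHasseDeriv jj F) ≠ 0 := by
  classical
  by_contra hcon
  push_neg at hcon
  obtain ⟨f, hfdeg, hfsum⟩ := CNaux.exists_decomposition S ord hS F
  have hd : ∀ j, 0 < (S j).card := fun j => Finset.card_pos.mpr (hS j)
  set w : (Fin m →₀ ℕ) → ℕ := fun r => r.sum (fun _ x => x) with hw
  have hwlt : ∀ r' r : Fin m →₀ ℕ, r' ≤ r → r' ≠ r → w r' < w r := by
    intro r' r hle hne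
    rw [hw]
    simp only
    rw [Finsupp.sum_fintype _ _ (fun _ => rfl), Finsupp.sum_fintype _ _ (fun _ => rfl)]
    apply Finset.sum_lt_sum (fun j _ => Finsupp.le_def.mp hle j)
    by_contra hno
    push_neg at hno
    exact hne (Finsupp.ext fun j =>
      le_antisymm (hno j (Finset.mem_univ j)) (Finsupp.le_def.mp hle j)).symm
  -- Claim: all coefficients indexed by J vanish
  have claim : ∀ n : ℕ, ∀ r, r ∈ J → w r = n → f r = 0 := by
    intro n
    induction n using Nat.strong_induction_on with
    | _ n IH =>
    intro r hrJ hrw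
    by_cases hrs : r ∈ f.support
    case neg => exact Finsupp.notMem_support_iff.mp hrs
    have hfr : ∀ s : Fin m → K, (∀ j, s j ∈ S j) → eval s (f r) = 0 := by
      intro s hs
      set τ : Fin m → MvPolynomial (Fin m) K := fun j => (X j + C (s j)) with hτ
      set Hf : Fin m → MvPolynomial (Fin m) K :=
        fun j => ∏ a ∈ (S j).erase (s j), (X j + C (s j - a)) with hHf
      have htg : ∀ r' : Fin m →₀ ℕ,
          aeval τ (CNaux.Gprod S r') = monomial r' (1:K) * ∏ j, (Hf j)^(r' j) := by
        intro r'
        rw [CNaux.Gprod, map_prod]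
        have hfax : ∀ j : Fin m, aeval τ (CNaux.gpoly S j) = X j * Hf j := by
          intro j
          rw [CNaux.gpoly, map_prod]
          have hstep : ∀ a ∈ S j, aeval τ (X j - C a) = X j + C (s j - a) := by
            intro a _
            rw [map_sub, aeval_X, aeval_C, hτ, map_sub, MvPolynomial.algebraMap_eq]
            ring
          rw [Finset.prod_congr rfl hstep, ← Finset.mul_prod_erase (S j) _ (hs j)]
          simp [hHf]
        simp_rw [map_pow, hfax, mul_pow]
        rw [Finset.prod_mul_distrib]
        congr 1
        rw [MvPolynomial.monomial_eq, Finsupp.prod_fintype _ _ (fun _ => pow_zero _)]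
        simp
      have hH0 : constantCoeff (∏ j, (Hf j)^(r j)) ≠ 0 := by
        rw [map_prod]
        apply Finset.prod_ne_zero_iff.mpr
        intro j _
        rw [map_pow]
        apply pow_ne_zero
        rw [hHf]
        simp only
        rw [map_prod]
        apply Finset.prod_ne_zero_iff.mpr
        intro a ha
        rw [map_add, constantCoeff_X, constantCoeff_C, zero_add]
        exact sub_ne_zero.mpr (Ne.symm (Finset.ne_of_mem_erase ha))
      have h0 : coeff r (aeval τ F) = 0 := by
        rw [← CNaux.eval_mvHasseDeriv]
        exact hcon s hs r hrJ
      rw [hfsum, Finsupp.sum, map_sum, coeff_sum] at h0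
      rw [Finset.sum_eq_single r] at h0
      · rw [map_mul, htg r, mul_left_comm, coeff_monomial_mul', if_pos le_rfl, one_mul,
          tsub_self, ← constantCoeff_eq, map_mul, CNaux.constantCoeff_taus] at h0
        exact (mul_eq_zero.mp h0).resolve_right hH0
      · intro r' hr's hne
        rw [map_mul, htg r', mul_left_comm, coeff_monomial_mul']
        by_cases hle : r' ≤ r
        · rw [if_pos hle]
          have hr'J : r' ∈ J := hJ r hrJ r' hle
          have hfr' : f r' = 0 := IH (w r') (hrw ▸ hwlt r' r hle hne) r' hr'J rfl
          rw [hfr', map_zero, zero_mul, coeff_zero, mul_zero]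
        · rw [if_neg hle]
      · intro habs
        exact absurd hrs habs
    by_contra hfne
    obtain ⟨s, hsg, hse⟩ := CNaux.exists_grid_eval_ne_zero m (f r) S hfne (fun j => hfdeg r j)
    exact hse (hfr s hsg)
  have hnotJ : ∀ r ∈ f.support, r ∉ J := by
    intro r hrs hrJ
    exact (Finsupp.mem_support_iff.mp hrs) (claim (w r) r hrJ rfl)
  -- Leading monomials of f r
  have hL : ∀ r ∈ f.support, ∃ u, IsLeadingMonomial ord (f r) u :=
    fun r hrs => CNaux.exists_isLeadingMonomial ord (Finsupp.mem_support_iff.mp hrs)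
  set L : (Fin m →₀ ℕ) → (Fin m →₀ ℕ) := fun r =>
    if h : f r ≠ 0 then (CNaux.exists_isLeadingMonomial ord h).choose else 0 with hLdef
  have hLlm : ∀ r ∈ f.support, IsLeadingMonomial ord (f r) (L r) := by
    intro r hrs
    have h := Finsupp.mem_support_iff.mp hrs
    rw [hLdef]
    simp only [h, ne_eq, not_false_eq_true, dif_pos]
    exact (CNaux.exists_isLeadingMonomial ord h).choose_spec
  have hLsmall : ∀ r ∈ f.support, ∀ j, L r j < (S j).card := by
    intro r hrs j
    exact lt_of_le_of_lt (MvPolynomial.monomial_le_degreeOf j (hLlm r hrs).1) (hfdeg r j)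
  have hterm : ∀ r ∈ f.support, IsLeadingMonomial ord (f r * CNaux.Gprod S r)
      (L r + CNaux.Dall S r) ∧ coeff (L r + CNaux.Dall S r) (f r * CNaux.Gprod S r)
        = coeff (L r) (f r) := by
    intro r hrs
    have h := CNaux.isLeadingMonomial_mul ord (hLlm r hrs) (CNaux.isLeadingMonomial_Gprod ord S r).1
    exact ⟨h.1, by rw [h.2, (CNaux.isLeadingMonomial_Gprod ord S r).2, mul_one]⟩
  have hsuppne : f.support.Nonempty := by
    by_contra hemp
    rw [Finset.not_nonempty_iff_eq_empty] at hemp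
    apply hF
    rw [hfsum, Finsupp.sum, hemp, Finset.sum_empty]
  obtain ⟨ρ, hρs, hρmax⟩ := Finset.exists_max_image f.support
    (fun r => ord.toSyn (L r + CNaux.Dall S r)) hsuppne
  -- i is in the support of some term
  have hcoeffF : ∀ b : Fin m →₀ ℕ, coeff b F = ∑ r ∈ f.support, coeff b (f r * CNaux.Gprod S r) := by
    intro b
    rw [hfsum, Finsupp.sum, coeff_sum]
  have hile : ord.toSyn i ≤ ord.toSyn (L ρ + CNaux.Dall S ρ) := by
    have hci : coeff i F ≠ 0 := mem_support_iff.mp hlm.1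
    rw [hcoeffF i] at hci
    obtain ⟨r0, hr0s, hr0⟩ := Finset.exists_ne_zero_of_sum_ne_zero hci
    calc ord.toSyn i ≤ ord.toSyn (L r0 + CNaux.Dall S r0) :=
          (hterm r0 hr0s).1.2 i (mem_support_iff.mpr hr0)
    _ ≤ ord.toSyn (L ρ + CNaux.Dall S ρ) := hρmax r0 hr0s
  -- the coefficient of F at the max is the leading coeff of f ρ
  have hinj : ∀ r ∈ f.support, L r + CNaux.Dall S r = L ρ + CNaux.Dall S ρ → r = ρ := by
    intro r hrs he
    ext j
    have h1 : L r j + r j * (S j).card = L ρ j + ρ j * (S j).card := by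
      have := congrArg (fun v => v j) he
      simpa using this
    have h2 := hLsmall r hrs j
    have h3 := hLsmall ρ hρs j
    have hdj := hd j
    have e1 : (L r j + r j * (S j).card) / (S j).card = r j := by
      rw [Nat.add_mul_div_right _ _ hdj, Nat.div_eq_of_lt h2, zero_add]
    have e2 : (L ρ j + ρ j * (S j).card) / (S j).card = ρ j := by
      rw [Nat.add_mul_div_right _ _ hdj, Nat.div_eq_of_lt h3, zero_add]
    rw [← e1, ← e2, h1]
  have hcρ : coeff (L ρ + CNaux.Dall S ρ) F = coeff (L ρ) (f ρ) := by
    rw [hcoeffF]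
    rw [Finset.sum_eq_single ρ]
    · exact (hterm ρ hρs).2
    · intro r hrs hne
      by_contra hnz
      have hmem : (L ρ + CNaux.Dall S ρ) ∈ (f r * CNaux.Gprod S r).support :=
        mem_support_iff.mpr hnz
      have hle1 := (hterm r hrs).1.2 _ hmem
      have heq : L r + CNaux.Dall S r = L ρ + CNaux.Dall S ρ :=
        ord.toSyn.injective (le_antisymm (hρmax r hrs) (le_trans ?_ hle1))
      · exact hne (hinj r hrs heq)
      · exact le_refl _
    · intro habs
      exact absurd hρs habs
  have him : i = L ρ + CNaux.Dall S ρ := by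
    have hne : coeff (L ρ + CNaux.Dall S ρ) F ≠ 0 := by
      rw [hcρ]
      exact mem_support_iff.mp (hLlm ρ hρs).1
    have hge := hlm.2 _ (mem_support_iff.mpr hne)
    exact ord.toSyn.injective (le_antisymm hile hge)
  refine hi ρ (hnotJ ρ hρs) ?_
  intro j
  have : i j = L ρ j + ρ j * (S j).card := by
    rw [him]
    simp
  omega
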